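/- arXiv:1305.2036 — 2 statements merged into one kernel-verified Lean document; each statement's English description precedes it below -/
import Mathlib

section
/- (Discrete Datko theorem) If there exists a constant D ≥ 1 such that Σ_{m=n}^∞ ‖A_m^n x‖ ≤ D ‖x‖ for all n ∈ ℕ and x ∈ X, then the system is uniformly exponentially stable. -/
open scoped BigOperators

/-- The evolution operator `A_m^n = A(m) ∘ ⋯ ∘ A(n+1)`, with `A_n^n = 1`. -/
noncomputable def evol {X : Type*} [NormedAddCommGroup X] [NormedSpace ℝ X]
    (A : ℕ → X →L[ℝ] X) (m n : ℕ) : X →L[ℝ] X :=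
  ((List.range (m - n)).map (fun k => A (n + k + 1))).foldl (fun P B => B ∘L P) 1

lemma evol_self {X : Type*} [NormedAddCommGroup X] [NormedSpace ℝ X]
    (A : ℕ → X →L[ℝ] X) (n : ℕ) : evol A n n = 1 := by
  simp [evol]

lemma evol_succ {X : Type*} [NormedAddCommGroup X] [NormedSpace ℝ X]
    (A : ℕ → X →L[ℝ] X) (m n : ℕ) (hnm : n ≤ m) :
    evol A (m + 1) n = A (m + 1) ∘L evol A m n := by
  unfold evol
  have h1 : m + 1 - n = (m - n) + 1 := by omega
  rw [h1, List.range_succ, List.map_append, List.foldl_append]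
  have h2 : n + (m - n) + 1 = m + 1 := by omega
  simp [h2]

lemma evol_comp {X : Type*} [NormedAddCommGroup X] [NormedSpace ℝ X]
    (A : ℕ → X →L[ℝ] X) {n k m : ℕ} (hnk : n ≤ k) (hkm : k ≤ m) :
    evol A m n = evol A m k ∘L evol A k n := by
  induction m, hkm using Nat.le_induction with
  | base =>
    rw [evol_self, ContinuousLinearMap.one_def, ContinuousLinearMap.id_comp]
  | succ m hm ih =>
    rw [evol_succ A m n (hnk.trans hm), evol_succ A m k hm, ih,
      ContinuousLinearMap.comp_assoc]

theorem stmt4 {X : Type*} [NormedAddCommGroup X] [NormedSpace ℝ X] [CompleteSpace X]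
    (A : ℕ → X →L[ℝ] X) (D : ℝ) (hD : 1 ≤ D)
    (h : ∀ n : ℕ, ∀ x : X, ∀ M : ℕ, n ≤ M →
      ∑ m ∈ Finset.Icc n M, ‖evol A m n x‖ ≤ D * ‖x‖) :
    ∃ N α : ℝ, 1 ≤ N ∧ 0 < α ∧
      ∀ n m : ℕ, n ≤ m → ∀ x : X,
        ‖evol A m n x‖ ≤ N * Real.exp (-α * ((m : ℝ) - n)) * ‖x‖ := by
  have hD0 : (0:ℝ) < D := lt_of_lt_of_le one_pos hD
  -- uniform bound
  have hbound : ∀ n m : ℕ, n ≤ m → ∀ x : X, ‖evol A m n x‖ ≤ D * ‖x‖ := by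
    intro n m hnm x
    refine le_trans ?_ (h n x m hnm)
    exact Finset.single_le_sum (f := fun k => ‖evol A k n x‖)
      (fun i _ => norm_nonneg _) (Finset.mem_Icc.mpr ⟨hnm, le_rfl⟩)
  -- quadratic bound
  have hsum2 : ∀ n m : ℕ, n ≤ m → ∀ x : X,
      ((m : ℝ) - n + 1) * ‖evol A m n x‖ ≤ D ^ 2 * ‖x‖ := by
    intro n m hnm x
    have key : ∀ k ∈ Finset.Icc n m, ‖evol A m n x‖ ≤ D * ‖evol A k n x‖ := by
      intro k hk
      obtain ⟨hnk, hkm⟩ := Finset.mem_Icc.mp hk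
      rw [evol_comp A hnk hkm]
      exact hbound k m hkm (evol A k n x)
    have h1 : ∑ k ∈ Finset.Icc n m, ‖evol A m n x‖
        ≤ ∑ k ∈ Finset.Icc n m, D * ‖evol A k n x‖ := Finset.sum_le_sum key
    rw [Finset.sum_const, ← Finset.mul_sum] at h1
    have hcard : (Finset.Icc n m).card = m + 1 - n := Nat.card_Icc n m
    have h2 : ∑ k ∈ Finset.Icc n m, ‖evol A k n x‖ ≤ D * ‖x‖ := h n x m hnm
    have h3 : D * ∑ k ∈ Finset.Icc n m, ‖evol A k n x‖ ≤ D * (D * ‖x‖) :=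
      mul_le_mul_of_nonneg_left h2 (le_of_lt hD0)
    have hcast : ((Finset.Icc n m).card : ℝ) = (m : ℝ) - n + 1 := by
      rw [hcard]; push_cast [Nat.cast_sub (by omega : n ≤ m + 1)]; ring
    calc ((m : ℝ) - n + 1) * ‖evol A m n x‖
        = (Finset.Icc n m).card • ‖evol A m n x‖ := by
          rw [nsmul_eq_mul, hcast]
      _ ≤ D * (D * ‖x‖) := le_trans h1 h3
      _ = D ^ 2 * ‖x‖ := by ring
  set E := Real.exp 1 with hE
  have hE1 : (1:ℝ) < E := by
    rw [hE]; calc (1:ℝ) < 2 := one_lt_two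
      _ ≤ Real.exp 1 := by
          have := Real.add_one_le_exp (1:ℝ); linarith
  have hE0 : (0:ℝ) < E := lt_trans one_pos hE1
  set ℓ : ℕ := ⌈E * D ^ 2⌉₊ with hℓdef
  have hℓ : E * D ^ 2 ≤ (ℓ : ℝ) := Nat.le_ceil _
  have hℓpos : 0 < ℓ := by
    rw [hℓdef]
    exact Nat.ceil_pos.mpr (by positivity)
  -- one-block contraction
  have hstep : ∀ n : ℕ, ∀ x : X, ‖evol A (n + ℓ) n x‖ ≤ Real.exp (-1) * ‖x‖ := by
    intro n x
    have h1 := hsum2 n (n + ℓ) (Nat.le_add_right n ℓ) x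
    have h2 : ((n + ℓ : ℕ) : ℝ) - n + 1 = (ℓ : ℝ) + 1 := by push_cast; ring
    rw [h2] at h1
    rw [Real.exp_neg, ← hE, inv_mul_eq_div, le_div_iff₀ hE0]
    have hx : (0:ℝ) ≤ ‖x‖ := norm_nonneg x
    have hy : (0:ℝ) ≤ ‖evol A (n + ℓ) n x‖ := norm_nonneg _
    nlinarith [sq_nonneg D, mul_le_mul_of_nonneg_right hℓ hy]
  -- iterated contraction
  have hiter : ∀ q n : ℕ, ∀ x : X,
      ‖evol A (n + q * ℓ) n x‖ ≤ Real.exp (-(q : ℝ)) * ‖x‖ := by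
    intro q
    induction q with
    | zero => intro n x; simp [evol_self]
    | succ q ih =>
      intro n x
      have heq : n + (q + 1) * ℓ = (n + q * ℓ) + ℓ := by ring
      have hcomp : evol A (n + (q + 1) * ℓ) n
          = evol A ((n + q * ℓ) + ℓ) (n + q * ℓ) ∘L evol A (n + q * ℓ) n := by
        rw [heq]; exact evol_comp A (Nat.le_add_right _ _) (Nat.le_add_right _ _)
      rw [hcomp]
      calc ‖evol A ((n + q * ℓ) + ℓ) (n + q * ℓ) (evol A (n + q * ℓ) n x)‖
          ≤ Real.exp (-1) * ‖evol A (n + q * ℓ) n x‖ := hstep _ _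
        _ ≤ Real.exp (-1) * (Real.exp (-(q : ℝ)) * ‖x‖) :=
            mul_le_mul_of_nonneg_left (ih n x) (le_of_lt (Real.exp_pos _))
        _ = Real.exp (-((q : ℕ) + 1 : ℝ)) * ‖x‖ := by
            rw [← mul_assoc, ← Real.exp_add]; ring_nf
      rw [Nat.cast_succ]
  refine ⟨D * E, 1 / (ℓ : ℝ), ?_, ?_, ?_⟩
  · nlinarith
  · positivity
  · intro n m hnm x
    have hℓR : (0:ℝ) < (ℓ : ℝ) := by exact_mod_cast hℓpos
    set d : ℕ := m - n with hd
    set q : ℕ := d / ℓ with hq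
    have hdq : q * ℓ ≤ d := Nat.div_mul_le_self d ℓ
    have hdq2 : d < (q + 1) * ℓ := by
      rw [hq]; exact (Nat.div_lt_iff_lt_mul hℓpos).mp (Nat.lt_succ_self _)
    have hnm' : n + q * ℓ ≤ m := by omega
    have h1 : ‖evol A m n x‖ ≤ D * ‖evol A (n + q * ℓ) n x‖ := by
      rw [evol_comp A (Nat.le_add_right n _) hnm']
      exact hbound _ _ hnm' _
    have h2 := hiter q n x
    have hexp : Real.exp (-(q : ℝ)) ≤ E * Real.exp (-(1 / (ℓ : ℝ)) * ((m : ℝ) - n)) := by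
      rw [hE, ← Real.exp_add]
      apply Real.exp_le_exp.mpr
      have hdcast : ((m : ℝ) - n) = (d : ℝ) := by
        rw [hd, Nat.cast_sub hnm]
      rw [hdcast]
      have hle : (d : ℝ) ≤ ((q : ℝ) + 1) * ℓ := by exact_mod_cast hdq2.le
      have h4 : (d : ℝ) / ℓ ≤ (q : ℝ) + 1 := (div_le_iff₀ hℓR).mpr hle
      have h5 : -(1 / (ℓ : ℝ)) * d = -((d : ℝ) / ℓ) := by ring
      rw [h5]
      linarith
    calc ‖evol A m n x‖ ≤ D * ‖evol A (n + q * ℓ) n x‖ := h1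
      _ ≤ D * (Real.exp (-(q : ℝ)) * ‖x‖) := mul_le_mul_of_nonneg_left h2 hD0.le
      _ ≤ D * (E * Real.exp (-(1 / (ℓ : ℝ)) * ((m : ℝ) - n)) * ‖x‖) :=
          mul_le_mul_of_nonneg_left
            (mul_le_mul_of_nonneg_right hexp (norm_nonneg x)) hD0.le
      _ = D * E * Real.exp (-(1 / (ℓ : ℝ)) * ((m : ℝ) - n)) * ‖x‖ := by ring
end

section
/- The system is exponentially stable if and only if there exist constants B ≥ 1, b > 0 and c ∈ [0, b) such that Σ_{k=0}^m e^{b(m-k)} ‖(A_m^k)* x*‖ ≤ B e^{c m} ‖x*‖ for all m ∈ ℕ and x* ∈ X*. -/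
open scoped BigOperators

lemma geom_aux (n : ℕ) : ∑ k ∈ Finset.range n, Real.exp (-1) ^ k ≤ (1 - Real.exp (-1))⁻¹ := by
  have h1 : (0:ℝ) ≤ Real.exp (-1) := (Real.exp_pos _).le
  have h2 : Real.exp (-1) < 1 := by
    rw [Real.exp_lt_one_iff]; norm_num
  calc ∑ k ∈ Finset.range n, Real.exp (-1) ^ k
      ≤ ∑' k : ℕ, Real.exp (-1) ^ k :=
        Summable.sum_le_tsum _ (fun k _ => pow_nonneg h1 k) (summable_geometric_of_lt_one h1 h2)
    _ = (1 - Real.exp (-1))⁻¹ := tsum_geometric_of_lt_one h1 h2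

theorem stmt13 {X : Type*} [NormedAddCommGroup X] [NormedSpace ℝ X] [CompleteSpace X]
    (A : ℕ → X →L[ℝ] X) :
    (∃ N α β : ℝ, 1 ≤ N ∧ 0 < α ∧ 0 ≤ β ∧
      ∀ n m : ℕ, n ≤ m → ∀ x : X,
        ‖evol A m n x‖ ≤ N * Real.exp (-α * ((m : ℝ) - n)) * Real.exp (β * n) * ‖x‖) ↔
    (∃ B b c : ℝ, 1 ≤ B ∧ 0 < b ∧ 0 ≤ c ∧ c < b ∧
      ∀ m : ℕ, ∀ xs : X →L[ℝ] ℝ,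
        ∑ k ∈ Finset.range (m + 1),
          Real.exp (b * ((m : ℝ) - k)) * ‖xs.comp (evol A m k)‖
            ≤ B * Real.exp (c * m) * ‖xs‖) := by
  have hinv1 : (1:ℝ) ≤ (1 - Real.exp (-1))⁻¹ := by
    have h2 : Real.exp (-1) < 1 := by rw [Real.exp_lt_one_iff]; norm_num
    have h0 : 0 < 1 - Real.exp (-1) := by linarith
    rw [← one_div, le_div_iff₀ h0]
    linarith [Real.exp_pos (-1:ℝ)]
  constructor
  · rintro ⟨N, α, β, hN, hα, hβ, hbound⟩
    refine ⟨N * (1 - Real.exp (-1))⁻¹, α + β + 1, β + 1, ?_, by positivity, by positivity,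
      by linarith, ?_⟩
    · calc (1:ℝ) = 1 * 1 := by ring
        _ ≤ N * (1 - Real.exp (-1))⁻¹ := by
            apply mul_le_mul hN hinv1 zero_le_one (by linarith)
    · intro m xs
      have step : ∀ k ∈ Finset.range (m + 1),
          Real.exp ((α + β + 1) * ((m : ℝ) - k)) * ‖xs.comp (evol A m k)‖ ≤
            N * Real.exp ((β + 1) * m) * ‖xs‖ * Real.exp (-1) ^ k := by
        intro k hk
        have hkm : k ≤ m := Nat.lt_succ_iff.mp (Finset.mem_range.mp hk)
        have hop : ‖evol A m k‖ ≤ N * Real.exp (-α * ((m : ℝ) - k)) * Real.exp (β * k) := by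
          apply ContinuousLinearMap.opNorm_le_bound
          · positivity
          · exact hbound k m hkm
        have hcomp : ‖xs.comp (evol A m k)‖ ≤
            ‖xs‖ * (N * Real.exp (-α * ((m : ℝ) - k)) * Real.exp (β * k)) :=
          (ContinuousLinearMap.opNorm_comp_le _ _).trans
            (mul_le_mul_of_nonneg_left hop (norm_nonneg _))
        calc Real.exp ((α + β + 1) * ((m : ℝ) - k)) * ‖xs.comp (evol A m k)‖
            ≤ Real.exp ((α + β + 1) * ((m : ℝ) - k)) *
                (‖xs‖ * (N * Real.exp (-α * ((m : ℝ) - k)) * Real.exp (β * k))) :=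
              mul_le_mul_of_nonneg_left hcomp (Real.exp_pos _).le
          _ = N * Real.exp ((β + 1) * m) * ‖xs‖ * Real.exp (-1) ^ k := by
              rw [← Real.exp_nat_mul]
              rw [show (N * Real.exp ((β + 1) * m) * ‖xs‖ * Real.exp ((k : ℝ) * -1)) =
                  N * ‖xs‖ * (Real.exp ((β + 1) * m) * Real.exp ((k : ℝ) * -1)) by ring,
                ← Real.exp_add]
              rw [show (Real.exp ((α + β + 1) * ((m : ℝ) - k)) *
                  (‖xs‖ * (N * Real.exp (-α * ((m : ℝ) - k)) * Real.exp (β * k)))) =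
                  N * ‖xs‖ * (Real.exp ((α + β + 1) * ((m : ℝ) - k)) *
                    Real.exp (-α * ((m : ℝ) - k)) * Real.exp (β * k)) by ring,
                ← Real.exp_add, ← Real.exp_add]
              congr 1
              ring
      calc ∑ k ∈ Finset.range (m + 1),
            Real.exp ((α + β + 1) * ((m : ℝ) - k)) * ‖xs.comp (evol A m k)‖
          ≤ ∑ k ∈ Finset.range (m + 1),
              N * Real.exp ((β + 1) * m) * ‖xs‖ * Real.exp (-1) ^ k :=
            Finset.sum_le_sum step
        _ = N * Real.exp ((β + 1) * m) * ‖xs‖ *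
              ∑ k ∈ Finset.range (m + 1), Real.exp (-1) ^ k := by
            rw [Finset.mul_sum]
        _ ≤ N * Real.exp ((β + 1) * m) * ‖xs‖ * (1 - Real.exp (-1))⁻¹ := by
            apply mul_le_mul_of_nonneg_left (geom_aux _) (by positivity)
        _ = N * (1 - Real.exp (-1))⁻¹ * Real.exp ((β + 1) * m) * ‖xs‖ := by ring
  · rintro ⟨B, b, c, hB, hb, hc, hcb, hbound⟩
    refine ⟨B, b - c, c, hB, by linarith, hc, ?_⟩
    intro n m hnm x
    set y := evol A m n x with hy
    by_cases hy0 : y = 0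
    · rw [hy0, norm_zero]; positivity
    · obtain ⟨g, hg1, hgy⟩ := exists_dual_vector ℝ y (norm_ne_zero_iff.mpr hy0)
      have hterm : Real.exp (b * ((m : ℝ) - n)) * ‖g.comp (evol A m n)‖ ≤
          B * Real.exp (c * m) * ‖g‖ := by
        refine le_trans (Finset.single_le_sum (f := fun k : ℕ =>
            Real.exp (b * ((m : ℝ) - (k : ℝ))) * ‖g.comp (evol A m k)‖)
            (fun k _ => by positivity) (Finset.mem_range.mpr (Nat.lt_succ_of_le hnm)))
          (hbound m g)
      rw [hg1, mul_one] at hterm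
      have hopn : ‖g.comp (evol A m n)‖ ≤ B * Real.exp (c * m) / Real.exp (b * ((m : ℝ) - n)) := by
        rw [le_div_iff₀ (Real.exp_pos _)]
        linarith [hterm]
      have hval : ‖y‖ = g y := by exact_mod_cast hgy.symm
      have : ‖y‖ ≤ ‖g.comp (evol A m n)‖ * ‖x‖ := by
        rw [hval]
        calc g y = g.comp (evol A m n) x := rfl
          _ ≤ |g.comp (evol A m n) x| := le_abs_self _
          _ = ‖g.comp (evol A m n) x‖ := (Real.norm_eq_abs _).symm
          _ ≤ ‖g.comp (evol A m n)‖ * ‖x‖ := ContinuousLinearMap.le_opNorm _ _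
      calc ‖y‖ ≤ ‖g.comp (evol A m n)‖ * ‖x‖ := this
        _ ≤ (B * Real.exp (c * m) / Real.exp (b * ((m : ℝ) - n))) * ‖x‖ :=
            mul_le_mul_of_nonneg_right hopn (norm_nonneg _)
        _ = B * Real.exp (-(b - c) * ((m : ℝ) - n)) * Real.exp (c * n) * ‖x‖ := by
            have e1 : Real.exp (c * m) / Real.exp (b * ((m : ℝ) - n)) =
                Real.exp (-(b - c) * ((m : ℝ) - n)) * Real.exp (c * n) := by
              rw [div_eq_iff (Real.exp_pos _).ne', ← Real.exp_add, ← Real.exp_add]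
              congr 1
              ring
            rw [mul_div_assoc, e1]
            ring
end
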